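/- arXiv:2501.19213 — 7 statements merged into one kernel-verified Lean document; each statement's English description precedes it below -/
import Mathlib

section
/- Suppose b := 1_d^⊤Σ^{-1}μ > 0 and let x_TAN := Σ^{-1}μ/b (the tangency portfolio with zero risk-free rate). Then 1_d^⊤x_TAN = 1, and for every x ∈ ℝ^d with 1_d^⊤x = 1 one has μ^⊤x / √(x^⊤Σx) ≤ √c = μ^⊤x_TAN / √(x_TAN^⊤Σx_TAN); i.e., x_TAN maximizes the Sharpe ratio μ^⊤x/√(x^⊤Σx) among all fully invested portfolios. -/
open Matrix

/-- If `b = 1ᵀΣ⁻¹μ > 0`, the tangency portfolio `x_TAN = Σ⁻¹μ / b` is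
fully invested and maximizes the Sharpe ratio `μᵀx / √(xᵀΣx)` among all fully
invested portfolios, the maximal value being `√c`. -/
theorem tangency_portfolio_maximizes_sharpe_ratio
    {d : ℕ} (hd : 2 ≤ d) (A : Matrix (Fin d) (Fin d) ℝ) (hA : A.PosDef)
    (μ : Fin d → ℝ)
    (b c : ℝ)
    (hb : b = (fun _ => (1 : ℝ)) ⬝ᵥ (A⁻¹ *ᵥ μ))
    (hc : c = μ ⬝ᵥ (A⁻¹ *ᵥ μ))
    (hbpos : 0 < b)
    (xTAN : Fin d → ℝ) (hx : xTAN = b⁻¹ • (A⁻¹ *ᵥ μ)) :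
    ((fun _ => (1 : ℝ)) ⬝ᵥ xTAN = 1) ∧
    (∀ x : Fin d → ℝ, (fun _ => (1 : ℝ)) ⬝ᵥ x = 1 →
      μ ⬝ᵥ x / Real.sqrt (x ⬝ᵥ (A *ᵥ x)) ≤ Real.sqrt c) ∧
    (Real.sqrt c = μ ⬝ᵥ xTAN / Real.sqrt (xTAN ⬝ᵥ (A *ᵥ xTAN))) := by
  have hAd : IsUnit A.det := isUnit_iff_ne_zero.mpr (ne_of_gt hA.det_pos)
  have hInv : A * A⁻¹ = 1 := A.mul_nonsing_inv hAd
  set y : Fin d → ℝ := A⁻¹ *ᵥ μ with hy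
  have hAy : A *ᵥ y = μ := by
    rw [hy, mulVec_mulVec, hInv, one_mulVec]
  have hyne : y ≠ 0 := by
    intro h
    rw [h] at hb
    simp at hb
    exact absurd hb (ne_of_gt hbpos)
  have hpos : ∀ x : Fin d → ℝ, x ≠ 0 → 0 < x ⬝ᵥ (A *ᵥ x) := by
    intro x hxne
    have := hA.dotProduct_mulVec_pos hxne
    simpa using this
  have hAt : Aᵀ = A := by
    have := hA.1
    simpa [Matrix.IsHermitian] using this
  have hsymm : ∀ u v : Fin d → ℝ, u ⬝ᵥ (A *ᵥ v) = v ⬝ᵥ (A *ᵥ u) := by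
    intro u v
    rw [dotProduct_mulVec, ← mulVec_transpose, hAt, dotProduct_comm]
  have hcy : c = y ⬝ᵥ (A *ᵥ y) := by
    rw [hsymm, hAy, hc, hy, dotProduct_comm]
  have hcpos : 0 < c := hcy ▸ hpos y hyne
  -- Cauchy–Schwarz: (μ ⬝ᵥ x)² ≤ c * (x ⬝ᵥ A x)
  have hCS : ∀ x : Fin d → ℝ, (μ ⬝ᵥ x) ^ 2 ≤ c * (x ⬝ᵥ (A *ᵥ x)) := by
    intro x
    set p : ℝ := μ ⬝ᵥ x with hp
    set t : ℝ := p / c with ht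
    set z : Fin d → ℝ := x - t • y with hz
    have hz0 : 0 ≤ z ⬝ᵥ (A *ᵥ z) := by
      rcases eq_or_ne z 0 with h | h
      · simp [h]
      · exact le_of_lt (hpos z h)
    have hexp : z ⬝ᵥ (A *ᵥ z) = x ⬝ᵥ (A *ᵥ x) - 2 * t * p + t ^ 2 * c := by
      have h1 : x ⬝ᵥ (A *ᵥ y) = p := by rw [hAy, dotProduct_comm]
      have h2 : y ⬝ᵥ (A *ᵥ x) = p := by rw [hsymm, h1]
      have h3 : y ⬝ᵥ (A *ᵥ y) = c := hcy.symm
      rw [hz]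
      simp only [sub_dotProduct, dotProduct_sub, mulVec_sub, mulVec_smul,
        smul_dotProduct, dotProduct_smul, smul_eq_mul, h1, h2, h3]
      ring
    have h := hz0
    rw [hexp, ht] at h
    have e : x ⬝ᵥ (A *ᵥ x) - 2 * (p / c) * p + (p / c) ^ 2 * c
        = x ⬝ᵥ (A *ᵥ x) - p ^ 2 / c := by
      field_simp
      ring
    have h' : 0 ≤ x ⬝ᵥ (A *ᵥ x) - p ^ 2 / c := by
      calc (0:ℝ) ≤ _ := h
        _ = _ := e
    have := (div_le_iff₀ hcpos).mp (by linarith : p ^ 2 / c ≤ x ⬝ᵥ (A *ᵥ x))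
    linarith [this]
  refine ⟨?_, ?_, ?_⟩
  · rw [hx, dotProduct_smul, ← hb, smul_eq_mul, inv_mul_cancel₀ (ne_of_gt hbpos)]
  · intro x hx1
    set p : ℝ := μ ⬝ᵥ x with hp
    set S : ℝ := x ⬝ᵥ (A *ᵥ x) with hS
    have hSnn : 0 ≤ S := by
      rcases eq_or_ne x 0 with h | h
      · simp [hS, h]
      · exact le_of_lt (hpos x h)
    rcases le_or_gt p 0 with hple | hpgt
    · exact le_trans (div_nonpos_iff.mpr (Or.inr ⟨hple, Real.sqrt_nonneg _⟩)) (Real.sqrt_nonneg c)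
    · have hSpos : 0 < S := by
        by_contra h
        have hS0 : S = 0 := le_antisymm (not_lt.mp h) hSnn
        have := hCS x
        rw [← hp, ← hS, hS0, mul_zero] at this
        nlinarith
      rw [div_le_iff₀ (Real.sqrt_pos.mpr hSpos)]
      have : p = Real.sqrt (p ^ 2) := (Real.sqrt_sq hpgt.le).symm
      rw [this, ← Real.sqrt_mul hcpos.le]
      exact Real.sqrt_le_sqrt (hCS x)
  · have h1 : μ ⬝ᵥ xTAN = b⁻¹ * c := by
      rw [hx, dotProduct_smul, smul_eq_mul, hc]
    have h2 : xTAN ⬝ᵥ (A *ᵥ xTAN) = b⁻¹ ^ 2 * c := by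
      rw [hx, smul_dotProduct, mulVec_smul, dotProduct_smul, smul_eq_mul, smul_eq_mul,
        ← hcy]
      ring
    rw [h1, h2, Real.sqrt_mul (by positivity), Real.sqrt_sq (by positivity)]
    rw [mul_div_mul_left _ _ (by positivity : b⁻¹ ≠ 0)]
    rw [eq_comm, Real.div_sqrt]
end

section
/- For every i ∈ {1,…,d}, the population regression coefficients satisfy α_i = σ̃_i²·(Σ^{-1}μ)_i and 1 − 1_{d−1}^⊤β_i = σ̃_i²·(Σ^{-1}1_d)_i, where σ̃_i² > 0 (Lemma A1 of the paper, expressing the regression intercept and the deviation of the slope-sum from one in terms of the i-th coordinates of Σ^{-1}μ and Σ^{-1}1_d). -/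
open Matrix

/-- `Σ₋ᵢ`: the submatrix of `A` deleting row and column `i`. -/
noncomputable def subMat {d : ℕ} (A : Matrix (Fin d) (Fin d) ℝ) (i : Fin d) :
    Matrix {j : Fin d // j ≠ i} {j : Fin d // j ≠ i} ℝ :=
  A.submatrix Subtype.val Subtype.val

/-- `Γ₋ᵢ,ᵢ`: the `i`-th column of `A` with its `i`-th entry removed. -/
noncomputable def gammaCol {d : ℕ} (A : Matrix (Fin d) (Fin d) ℝ) (i : Fin d) :
    {j : Fin d // j ≠ i} → ℝ :=
  fun j => A j.val i

/-- Population regression slope `βᵢ := Σ₋ᵢ⁻¹ Γ₋ᵢ,ᵢ`. -/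
noncomputable def betaCoef {d : ℕ} (A : Matrix (Fin d) (Fin d) ℝ) (i : Fin d) :
    {j : Fin d // j ≠ i} → ℝ :=
  (subMat A i)⁻¹ *ᵥ gammaCol A i

/-- Population regression intercept `αᵢ := μᵢ − βᵢᵀ μ₋ᵢ`. -/
noncomputable def alphaCoef {d : ℕ} (A : Matrix (Fin d) (Fin d) ℝ) (μ : Fin d → ℝ)
    (i : Fin d) : ℝ :=
  μ i - ∑ j : {j : Fin d // j ≠ i}, betaCoef A i j * μ j.val

/-- Schur complement `σ̃ᵢ² := Σᵢᵢ − Γ₋ᵢ,ᵢᵀ Σ₋ᵢ⁻¹ Γ₋ᵢ,ᵢ`. -/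
noncomputable def schurCompl {d : ℕ} (A : Matrix (Fin d) (Fin d) ℝ) (i : Fin d) : ℝ :=
  A i i - gammaCol A i ⬝ᵥ ((subMat A i)⁻¹ *ᵥ gammaCol A i)

lemma sum_split {d : ℕ} (i : Fin d) (f : Fin d → ℝ) :
    ∑ k, f k = f i + ∑ j : {j : Fin d // j ≠ i}, f j.val := by
  rw [← Finset.add_sum_erase _ f (Finset.mem_univ i)]
  congr 1
  rw [Finset.sum_subtype (p := fun j => j ≠ i) (Finset.univ.erase i) (fun x => by simp [Finset.mem_erase]) f]

lemma subMat_posDef {d : ℕ} {A : Matrix (Fin d) (Fin d) ℝ} (hA : A.PosDef) (i : Fin d) :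
    (subMat A i).PosDef := by
  have hsym : ∀ j k, A j k = A k j := fun j k => by
    conv_lhs => rw [← hA.1]
    simp [conjTranspose_apply]
  refine Matrix.PosDef.of_dotProduct_mulVec_pos ?_ ?_
  · ext j k
    simp [subMat, conjTranspose_apply, hsym j.val k.val]
  · intro x hx
    set y : Fin d → ℝ := fun k => if h : k = i then 0 else x ⟨k, h⟩ with hy
    have hyne : y ≠ 0 := by
      intro h
      apply hx
      funext j
      have := congrFun h j.val
      simpa [hy, j.2] using this
    have := hA.dotProduct_mulVec_pos hyne
    have key : (star y) ⬝ᵥ (A *ᵥ y) = (star x) ⬝ᵥ (subMat A i *ᵥ x) := by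
      simp only [star_trivial, dotProduct, mulVec]
      rw [sum_split i]
      simp only [hy, dif_pos, zero_mul, zero_add]
      refine Finset.sum_congr rfl fun j _ => ?_
      congr 1
      · simp [j.2]
      · rw [sum_split i]
        simp only [dif_pos, mul_zero, zero_add, subMat, submatrix_apply]
        refine Finset.sum_congr rfl fun k _ => by simp [k.2]
    rwa [key] at this

lemma subMat_mulVec_beta {d : ℕ} {A : Matrix (Fin d) (Fin d) ℝ} (hA : A.PosDef) (i : Fin d) :
    subMat A i *ᵥ betaCoef A i = gammaCol A i := by
  rw [betaCoef, mulVec_mulVec,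
    Matrix.mul_nonsing_inv _ (subMat_posDef hA i).det_pos.ne'.isUnit, one_mulVec]

/-- Lemma A1 of the paper: `αᵢ = σ̃ᵢ²·(Σ⁻¹μ)ᵢ` and
`1 − 1ᵀβᵢ = σ̃ᵢ²·(Σ⁻¹1)ᵢ`, with `σ̃ᵢ² > 0`. -/
theorem regression_coefficients_via_inverse
    {d : ℕ} (hd : 2 ≤ d) (A : Matrix (Fin d) (Fin d) ℝ) (hA : A.PosDef)
    (μ : Fin d → ℝ) :
    ∀ i : Fin d,
      0 < schurCompl A i ∧
      alphaCoef A μ i = schurCompl A i * (A⁻¹ *ᵥ μ) i ∧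
      1 - ∑ j : {j : Fin d // j ≠ i}, betaCoef A i j
        = schurCompl A i * (A⁻¹ *ᵥ fun _ => (1 : ℝ)) i := by
  intro i
  have hsym : ∀ j k, A j k = A k j := fun j k => by
    conv_lhs => rw [← hA.1]
    simp [conjTranspose_apply]
  set u : Fin d → ℝ := fun k => if h : k = i then 1 else -(betaCoef A i ⟨k, h⟩) with hu
  have hAu : A *ᵥ u = fun k => if k = i then schurCompl A i else 0 := by
    funext k
    simp only [mulVec, dotProduct]
    rw [sum_split i (fun m => A k m * u m)]
    have hui : u i = 1 := by simp [hu]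
    by_cases hk : k = i
    · rw [if_pos hk, hui, mul_one]
      have hterm : ∀ j : {j : Fin d // j ≠ i},
          A k j.val * u j.val = -(gammaCol A i j * betaCoef A i j) := by
        intro j
        simp only [hu, dif_neg j.2, Subtype.coe_eta]
        rw [hk, hsym i j.val]
        show A j.val i * -(betaCoef A i j) = -(A j.val i * betaCoef A i j)
        ring
      rw [Finset.sum_congr rfl (fun j _ => hterm j), Finset.sum_neg_distrib, hk]
      simp [schurCompl, dotProduct, betaCoef, sub_eq_add_neg]
    · rw [if_neg hk, hui, mul_one]
      have hterm : ∀ j : {j : Fin d // j ≠ i},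
          A k j.val * u j.val = -(subMat A i ⟨k, hk⟩ j * betaCoef A i j) := by
        intro j
        simp only [hu, dif_neg j.2, Subtype.coe_eta]
        show A k j.val * -(betaCoef A i j) = -(subMat A i ⟨k, hk⟩ j * betaCoef A i j)
        rw [subMat, submatrix_apply]
        ring
      rw [Finset.sum_congr rfl (fun j _ => hterm j), Finset.sum_neg_distrib]
      have h2 : ∑ j : {j : Fin d // j ≠ i}, subMat A i ⟨k, hk⟩ j * betaCoef A i j
          = gammaCol A i ⟨k, hk⟩ := by
        have := congrFun (subMat_mulVec_beta hA i) ⟨k, hk⟩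
        simpa [mulVec, dotProduct] using this
      rw [h2]
      simp [gammaCol]
  have hdet : IsUnit A.det := hA.det_pos.ne'.isUnit
  have hu_eq : ∀ k, u k = schurCompl A i * A⁻¹ k i := by
    intro k
    have h1 : A⁻¹ *ᵥ (A *ᵥ u) = u := by
      rw [mulVec_mulVec, Matrix.nonsing_inv_mul _ hdet, one_mulVec]
    conv_lhs => rw [← h1, hAu]
    simp only [mulVec, dotProduct, mul_ite, mul_zero]
    rw [Finset.sum_ite_eq' Finset.univ i (fun m => A⁻¹ k m * schurCompl A i)]
    simp [mul_comm]
  have hinv_symm : ∀ k, A⁻¹ i k = A⁻¹ k i := fun k => by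
    conv_lhs => rw [← hA.1.inv]
    simp [conjTranspose_apply]
  have hmain : ∀ v : Fin d → ℝ, schurCompl A i * (A⁻¹ *ᵥ v) i
      = v i - ∑ j : {j : Fin d // j ≠ i}, betaCoef A i j * v j.val := by
    intro v
    simp only [mulVec, dotProduct, Finset.mul_sum]
    rw [sum_split i (fun k => schurCompl A i * (A⁻¹ i k * v k))]
    have hterm : ∀ k, schurCompl A i * (A⁻¹ i k * v k) = u k * v k := by
      intro k
      rw [hinv_symm k, ← mul_assoc, ← hu_eq k]
    rw [hterm i, Finset.sum_congr rfl (fun j _ => hterm j.val)]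
    have hui : u i = 1 := by simp [hu]
    have huj : ∀ j : {j : Fin d // j ≠ i}, u j.val = -(betaCoef A i j) := by
      intro j
      simp only [hu, dif_neg j.2]
    rw [hui, one_mul, Finset.sum_congr rfl (fun j _ => by rw [huj j])]
    simp only [neg_mul]
    rw [Finset.sum_neg_distrib, ← sub_eq_add_neg]
  have hune : u ≠ 0 := by
    intro h
    have := congrFun h i
    simp [hu] at this
  have hpos : 0 < schurCompl A i := by
    have h1 := hA.dotProduct_mulVec_pos hune
    have h2 : star u ⬝ᵥ (A *ᵥ u) = schurCompl A i := by
      rw [hAu]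
      simp only [star_trivial, dotProduct, mul_ite, mul_zero]
      rw [Finset.sum_ite_eq' Finset.univ i (fun k => u k * schurCompl A i)]
      simp [hu]
    rwa [h2] at h1
  refine ⟨hpos, ?_, ?_⟩
  · rw [hmain μ]; rfl
  · rw [hmain (fun _ => 1)]
    simp
end

section
/- The following support identities hold (equation (A.3) of the paper): {i ∈ {1,…,d} : (Σ^{-1}μ)_i ≠ 0} = {i ∈ {1,…,d} : α_i ≠ 0} and {i ∈ {1,…,d} : (Σ^{-1}1_d)_i ≠ 0} = {i ∈ {1,…,d} : 1_{d−1}^⊤β_i ≠ 1}. -/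
open Matrix

lemma key {d : ℕ} {A : Matrix (Fin d) (Fin d) ℝ} (hA : A.PosDef) (i : Fin d)
    (μ : Fin d → ℝ) :
    ∃ c : ℝ, c ≠ 0 ∧ (A⁻¹ *ᵥ μ) i = alphaCoef A μ i / c := by
  classical
  have hsub := subMat_posDef hA i
  have hdet : IsUnit (subMat A i).det := isUnit_iff_ne_zero.mpr hsub.det_pos.ne'
  have hβ : subMat A i *ᵥ betaCoef A i = gammaCol A i := by
    rw [betaCoef, mulVec_mulVec, mul_nonsing_inv _ hdet, one_mulVec]
  set v : Fin d → ℝ := fun k => if h : k = i then 1 else -betaCoef A i ⟨k, h⟩ with hv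
  have hvi : v i = 1 := by simp [hv]
  have hv0 : v ≠ 0 := fun h => by simpa [hvi] using congrFun h i
  -- (A *ᵥ v) k = 0 for k ≠ i
  have hAvk : ∀ k, k ≠ i → (A *ᵥ v) k = 0 := by
    intro k hk
    have hβk := congrFun hβ ⟨k, hk⟩
    simp only [mulVec, dotProduct] at hβk ⊢
    rw [sum_split i]
    simp only [hv, dif_pos, mul_one]
    have : ∑ j : {j : Fin d // j ≠ i}, A k j.val * (if h : j.val = i then 1
        else -betaCoef A i ⟨j.val, h⟩) = -∑ j : {j : Fin d // j ≠ i},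
        subMat A i ⟨k, hk⟩ j * betaCoef A i j := by
      rw [← Finset.sum_neg_distrib]
      refine Finset.sum_congr rfl fun j _ => ?_
      rw [dif_neg j.prop]
      simp only [subMat, submatrix_apply, Subtype.eta]
      ring
    rw [this, hβk]
    simp [gammaCol]
  set c : ℝ := (A *ᵥ v) i with hc
  have hcpos : 0 < c := by
    have := hA.dotProduct_mulVec_pos hv0
    have hdot : star v ⬝ᵥ (A *ᵥ v) = c := by
      simp only [star_trivial, dotProduct]
      rw [sum_split i, hvi, one_mul]
      rw [Finset.sum_eq_zero fun j _ => by rw [hAvk j.val j.prop, mul_zero]]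
      simp
      rfl
    rwa [hdot] at this
  have hc0 : c ≠ 0 := hcpos.ne'
  have hAv : A *ᵥ v = fun k => if k = i then c else 0 := by
    funext k
    by_cases h : k = i
    · subst h; simp [hc]
    · simp [h, hAvk k h]
  -- invert
  have hAdet : IsUnit A.det := isUnit_iff_ne_zero.mpr hA.det_pos.ne'
  have hvinv : v = A⁻¹ *ᵥ (fun k => if k = i then c else 0) := by
    rw [← hAv, mulVec_mulVec, nonsing_inv_mul _ hAdet, one_mulVec]
  have hAinvki : ∀ k, A⁻¹ k i = v k / c := by
    intro k
    have := congrFun hvinv k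
    simp only [mulVec, dotProduct, mul_ite, mul_zero] at this
    rw [Finset.sum_ite_eq' Finset.univ i (fun m => A⁻¹ k m * c)] at this
    simp at this
    rw [eq_div_iff hc0]; exact this.symm
  have hherm : (A⁻¹).IsHermitian := hA.1.inv
  have hAinvik : ∀ k, A⁻¹ i k = v k / c := by
    intro k
    rw [← hAinvki k]
    have := hherm.apply i k
    simpa using this.symm
  refine ⟨c, hc0, ?_⟩
  simp only [mulVec, dotProduct]
  calc ∑ k, A⁻¹ i k * μ k = ∑ k, v k * μ k / c := by
        refine Finset.sum_congr rfl fun k _ => ?_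
        rw [hAinvik k]; ring
    _ = (∑ k, v k * μ k) / c := by rw [Finset.sum_div]
    _ = alphaCoef A μ i / c := by
        congr 1
        rw [sum_split i, hvi, one_mul, alphaCoef]
        congr 1
        rw [← Finset.sum_neg_distrib]
        refine Finset.sum_congr rfl fun j _ => ?_
        simp [hv, j.prop]

/-- equation (A.3) of the paper: support identities
`{i : (Σ⁻¹μ)ᵢ ≠ 0} = {i : αᵢ ≠ 0}` and `{i : (Σ⁻¹1)ᵢ ≠ 0} = {i : 1ᵀβᵢ ≠ 1}`. -/
theorem support_identities
    {d : ℕ} (hd : 2 ≤ d) (A : Matrix (Fin d) (Fin d) ℝ) (hA : A.PosDef)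
    (μ : Fin d → ℝ) :
    ({i : Fin d | (A⁻¹ *ᵥ μ) i ≠ 0} = {i : Fin d | alphaCoef A μ i ≠ 0}) ∧
    ({i : Fin d | (A⁻¹ *ᵥ fun _ => (1 : ℝ)) i ≠ 0}
      = {i : Fin d | ∑ j : {j : Fin d // j ≠ i}, betaCoef A i j ≠ 1}) := by
  constructor
  · ext i
    obtain ⟨c, hc, h⟩ := key hA i μ
    simp [Set.mem_setOf_eq, h, div_ne_zero_iff, hc]
  · ext i
    obtain ⟨c, hc, h⟩ := key hA i (fun _ => (1 : ℝ))
    have halpha : alphaCoef A (fun _ => (1 : ℝ)) i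
        = 1 - ∑ j : {j : Fin d // j ≠ i}, betaCoef A i j := by
      simp [alphaCoef]
    simp only [Set.mem_setOf_eq, h, div_ne_zero_iff, hc, and_true, halpha]
    rw [sub_ne_zero]
    constructor
    · rintro ⟨h1, -⟩
      exact fun he => h1 he.symm
    · intro h1
      exact ⟨fun he => h1 he.symm, hc⟩
end

section
/- If S ⊆ {1,…,d} contains S*, then S spans the mean-variance frontier, i.e., v_S(μ_p) = v(μ_p) for every μ_p ∈ ℝ (sufficiency direction in the identification of the minimum spanning set: every minimum-variance portfolio is supported on S*). -/
open Matrix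

lemma symm_dot {d : ℕ} {M : Matrix (Fin d) (Fin d) ℝ} (hM : Mᵀ = M)
    (x y : Fin d → ℝ) : x ⬝ᵥ (M *ᵥ y) = y ⬝ᵥ (M *ᵥ x) := by
  rw [dotProduct_mulVec, ← mulVec_transpose, hM, dotProduct_comm]

lemma posdef_symm {d : ℕ} {M : Matrix (Fin d) (Fin d) ℝ} (hM : M.PosDef) : Mᵀ = M := by
  have := hM.1
  rwa [Matrix.IsHermitian, conjTranspose_eq_transpose_of_trivial] at this

lemma posdef_dot_nonneg {d : ℕ} {M : Matrix (Fin d) (Fin d) ℝ} (hM : M.PosDef)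
    (x : Fin d → ℝ) : 0 ≤ x ⬝ᵥ (M *ᵥ x) := by
  have := hM.posSemidef.dotProduct_mulVec_nonneg x
  simpa using this

/-- Existence of Lagrange multipliers when the feasible set is nonempty. -/
lemma exists_lagrange {d : ℕ} (hd : 2 ≤ d) (A : Matrix (Fin d) (Fin d) ℝ) (hA : A.PosDef)
    (μ : Fin d → ℝ) (p : ℝ) (x0 : Fin d → ℝ)
    (h1 : (fun _ => (1:ℝ)) ⬝ᵥ x0 = 1) (hμ : μ ⬝ᵥ x0 = p) :
    ∃ l g : ℝ, μ ⬝ᵥ (l • (A⁻¹ *ᵥ μ) + g • (A⁻¹ *ᵥ fun _ => (1:ℝ))) = p ∧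
      (fun _ => (1:ℝ)) ⬝ᵥ (l • (A⁻¹ *ᵥ μ) + g • (A⁻¹ *ᵥ fun _ => (1:ℝ))) = 1 := by
  set e : Fin d → ℝ := fun _ => (1:ℝ) with he
  have hAinv : A⁻¹.PosDef := hA.inv
  have hsymm : (A⁻¹)ᵀ = A⁻¹ := posdef_symm hAinv
  set a : ℝ := μ ⬝ᵥ (A⁻¹ *ᵥ μ) with ha
  set b : ℝ := μ ⬝ᵥ (A⁻¹ *ᵥ e) with hb
  set c : ℝ := e ⬝ᵥ (A⁻¹ *ᵥ e) with hc
  have hbe : e ⬝ᵥ (A⁻¹ *ᵥ μ) = b := symm_dot hsymm e μ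
  have hene : e ≠ 0 := by
    intro h
    have : (0:ℝ) = 1 := by
      have := congrFun h ⟨0, by omega⟩
      simpa [he] using this.symm
    norm_num at this
  have hcpos : 0 < c := by
    have := hAinv.dotProduct_mulVec_pos hene
    simpa [hc] using this
  by_cases hdet : a * c - b * b ≠ 0
  · refine ⟨(p * c - b) / (a * c - b * b), (a - p * b) / (a * c - b * b), ?_, ?_⟩
    · simp only [dotProduct_add, dotProduct_smul, smul_eq_mul, ← ha, ← hb]
      rw [div_mul_eq_mul_div, div_mul_eq_mul_div, ← add_div, div_eq_iff hdet]
      ring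
    · simp only [dotProduct_add, dotProduct_smul, smul_eq_mul, hbe, ← hc]
      rw [div_mul_eq_mul_div, div_mul_eq_mul_div, ← add_div, div_eq_iff hdet]
      ring
  · push_neg at hdet
    -- degenerate: μ = (b/c) • e
    have hmu : μ = (b / c) • e := by
      set w : Fin d → ℝ := μ - (b / c) • e with hw
      have hwq : w ⬝ᵥ (A⁻¹ *ᵥ w) = 0 := by
        have expand : w ⬝ᵥ (A⁻¹ *ᵥ w) =
            a - (b/c) * b - (b/c) * (e ⬝ᵥ (A⁻¹ *ᵥ μ)) + (b/c) * ((b/c) * c) := by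
          simp only [hw, sub_dotProduct, dotProduct_sub, mulVec_sub, mulVec_smul,
            smul_dotProduct, dotProduct_smul, smul_eq_mul, ← ha, ← hb, ← hc]
          ring
        rw [hbe] at expand
        rw [expand]
        field_simp
        nlinarith [hdet]
      by_contra hne
      have hwne : w ≠ 0 := by
        intro h
        apply hne
        have : μ - (b / c) • e = 0 := h
        funext i
        have := congrFun this i
        simpa [sub_eq_zero] using this
      have := hAinv.dotProduct_mulVec_pos hwne
      simp only [star_trivial] at this
      rw [hwq] at this
      exact lt_irrefl 0 this
    have hp : p = b / c := by
      rw [← hμ, hmu]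
      have : e ⬝ᵥ x0 = 1 := h1
      simp [smul_dotProduct, this]
    refine ⟨0, 1 / c, ?_, ?_⟩
    · simp only [dotProduct_add, dotProduct_smul, smul_eq_mul, ← hb, zero_smul,
        dotProduct_zero, smul_dotProduct]
      rw [hp]
      field_simp
      ring
    · simp only [dotProduct_add, dotProduct_smul, smul_eq_mul, hbe, ← hc, zero_smul,
        dotProduct_zero]
      field_simp
      ring

/-- `v_S(p)`: the infimum of portfolio variance over fully invested portfolios
supported on `S` with target mean `p`, valued in `EReal` (so `inf ∅ = +∞`). -/
noncomputable def vS {d : ℕ} (A : Matrix (Fin d) (Fin d) ℝ) (μ : Fin d → ℝ)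
    (S : Set (Fin d)) (p : ℝ) : EReal :=
  sInf {q : EReal | ∃ x : Fin d → ℝ,
    ((fun _ => (1 : ℝ)) ⬝ᵥ x = 1) ∧ (μ ⬝ᵥ x = p) ∧
    (∀ i, i ∉ S → x i = 0) ∧ q = ((x ⬝ᵥ (A *ᵥ x) : ℝ) : EReal)}

/-- `S` spans the mean-variance frontier of the full asset set. -/
def SpansFrontier {d : ℕ} (A : Matrix (Fin d) (Fin d) ℝ) (μ : Fin d → ℝ)
    (S : Set (Fin d)) : Prop :=
  ∀ p : ℝ, vS A μ S p = vS A μ Set.univ p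

/-- sufficiency: any `S` containing
`S* = {i : (Σ⁻¹μ)ᵢ ≠ 0 or (Σ⁻¹1)ᵢ ≠ 0}` spans the mean-variance frontier. -/
theorem superset_of_Sstar_spans
    {d : ℕ} (hd : 2 ≤ d) (A : Matrix (Fin d) (Fin d) ℝ) (hA : A.PosDef)
    (μ : Fin d → ℝ) (S : Set (Fin d))
    (hS : {i : Fin d | (A⁻¹ *ᵥ μ) i ≠ 0 ∨ (A⁻¹ *ᵥ fun _ => (1 : ℝ)) i ≠ 0} ⊆ S) :
    SpansFrontier A μ S := by
  intro p
  unfold vS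
  have hAsym : Aᵀ = A := posdef_symm hA
  set u : Fin d → ℝ := A⁻¹ *ᵥ μ with hu
  set w : Fin d → ℝ := A⁻¹ *ᵥ (fun _ => (1:ℝ)) with hw
  set TS := {q : EReal | ∃ x : Fin d → ℝ,
    ((fun _ => (1 : ℝ)) ⬝ᵥ x = 1) ∧ (μ ⬝ᵥ x = p) ∧
    (∀ i, i ∉ S → x i = 0) ∧ q = ((x ⬝ᵥ (A *ᵥ x) : ℝ) : EReal)} with hTS
  set TU := {q : EReal | ∃ x : Fin d → ℝ,
    ((fun _ => (1 : ℝ)) ⬝ᵥ x = 1) ∧ (μ ⬝ᵥ x = p) ∧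
    (∀ i, i ∉ (Set.univ : Set (Fin d)) → x i = 0) ∧ q = ((x ⬝ᵥ (A *ᵥ x) : ℝ) : EReal)} with hTU
  have hsubset : TS ⊆ TU := by
    rintro q ⟨x, h1, h2, _, h4⟩
    exact ⟨x, h1, h2, fun i hi => absurd (Set.mem_univ i) hi, h4⟩
  have hge : sInf TU ≤ sInf TS := sInf_le_sInf hsubset
  by_cases hfeas : ∃ x : Fin d → ℝ, ((fun _ => (1:ℝ)) ⬝ᵥ x = 1) ∧ μ ⬝ᵥ x = p
  · obtain ⟨x0, h01, h0μ⟩ := hfeas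
    obtain ⟨l, g, hyμ, hy1⟩ := exists_lagrange hd A hA μ p x0 h01 h0μ
    set y : Fin d → ℝ := l • u + g • w with hy
    have hysupp : ∀ i, i ∉ S → y i = 0 := by
      intro i hi
      have hiS : i ∉ {i : Fin d | u i ≠ 0 ∨ w i ≠ 0} := fun h => hi (hS h)
      simp only [Set.mem_setOf_eq, not_or, not_not] at hiS
      simp [hy, hiS.1, hiS.2]
    have hmem : ((y ⬝ᵥ (A *ᵥ y) : ℝ) : EReal) ∈ TS := ⟨y, hy1, hyμ, hysupp, rfl⟩
    have hle1 : sInf TS ≤ ((y ⬝ᵥ (A *ᵥ y) : ℝ) : EReal) := sInf_le hmem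
    have hAy : A *ᵥ y = l • μ + g • (fun _ => (1:ℝ)) := by
      have hAdet : IsUnit A.det := isUnit_iff_ne_zero.mpr hA.det_pos.ne'
      have h1 : A *ᵥ u = μ := by
        rw [hu, mulVec_mulVec, Matrix.mul_nonsing_inv A hAdet, one_mulVec]
      have h2 : A *ᵥ w = (fun _ => (1:ℝ)) := by
        rw [hw, mulVec_mulVec, Matrix.mul_nonsing_inv A hAdet, one_mulVec]
      rw [hy, mulVec_add, mulVec_smul, mulVec_smul, h1, h2]
    have hle2 : ((y ⬝ᵥ (A *ᵥ y) : ℝ) : EReal) ≤ sInf TU := by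
      apply le_sInf
      rintro q ⟨x, h1, h2, _, rfl⟩
      rw [EReal.coe_le_coe_iff]
      set z : Fin d → ℝ := x - y with hz
      have hzμ : μ ⬝ᵥ z = 0 := by rw [hz, dotProduct_sub, h2, hyμ, sub_self]
      have hz1 : (fun _ => (1:ℝ)) ⬝ᵥ z = 0 := by rw [hz, dotProduct_sub, h1, hy1, sub_self]
      have hzy : z ⬝ᵥ (A *ᵥ y) = 0 := by
        rw [hAy, dotProduct_add, dotProduct_smul, dotProduct_smul,
          dotProduct_comm z μ, hzμ, dotProduct_comm z, hz1]
        simp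
      have hyz : y ⬝ᵥ (A *ᵥ z) = 0 := by rw [symm_dot hAsym, hzy]
      have hxy : x = y + z := by simp [hz]
      have hznn : 0 ≤ z ⬝ᵥ (A *ᵥ z) := posdef_dot_nonneg hA z
      clear_value y z
      have key : x ⬝ᵥ (A *ᵥ x) = y ⬝ᵥ (A *ᵥ y) + z ⬝ᵥ (A *ᵥ z) := by
        rw [hxy, mulVec_add, dotProduct_add, add_dotProduct,
          add_dotProduct, hyz, hzy]
        ring
      linarith
    exact le_antisymm (le_trans hle1 hle2) hge
  · have hTU0 : TU = ∅ := by
      rw [Set.eq_empty_iff_forall_notMem]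
      rintro q ⟨x, h1, h2, _, _⟩
      exact hfeas ⟨x, h1, h2⟩
    have hTS0 : TS = ∅ := Set.subset_eq_empty hsubset hTU0
    rw [hTS0, hTU0]
end

section
/- Suppose μ is not a scalar multiple of 1_d. If S ⊆ {1,…,d} spans the mean-variance frontier, then S ⊇ S* (necessity direction in the identification of the minimum spanning set: any asset with a nonzero coordinate in Σ^{-1}μ or Σ^{-1}1_d cannot be removed without shrinking the frontier). -/
open Matrix

private lemma dot_swap' {d : ℕ} {A : Matrix (Fin d) (Fin d) ℝ} (hA : A.IsHermitian)
    (x y : Fin d → ℝ) : x ⬝ᵥ (A *ᵥ y) = y ⬝ᵥ (A *ᵥ x) := by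
  rw [dotProduct_mulVec, ← mulVec_transpose, dotProduct_comm]
  congr 1
  rw [show Aᵀ = A from (by simpa using hA : A.IsSymm)]

private lemma mulVec_inv_cancel' {d : ℕ} {A : Matrix (Fin d) (Fin d) ℝ} (hA : A.PosDef)
    (y : Fin d → ℝ) : A *ᵥ (A⁻¹ *ᵥ y) = y := by
  rw [mulVec_mulVec, Matrix.mul_nonsing_inv _ hA.det_pos.ne'.isUnit, one_mulVec]

private lemma inv_diag_pos' {d : ℕ} {A : Matrix (Fin d) (Fin d) ℝ} (hA : A.PosDef)
    (i : Fin d) : 0 < A⁻¹ i i := by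
  have := hA.inv.dotProduct_mulVec_pos (x := Pi.single i 1) (by simp [Function.ne_iff])
  simpa [single_dotProduct, mulVec_single] using this

/-- Cauchy–Schwarz-type bound: `y i ^ 2 / (A⁻¹ i i) ≤ yᵀ A y` for posdef `A`. -/
private lemma quad_lb' {d : ℕ} {A : Matrix (Fin d) (Fin d) ℝ} (hA : A.PosDef)
    (i : Fin d) (y : Fin d → ℝ) : (y i) ^ 2 / (A⁻¹ i i) ≤ y ⬝ᵥ (A *ᵥ y) := by
  set k := A⁻¹ i i with hkdef
  have hk : 0 < k := inv_diag_pos' hA i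
  set u := A⁻¹ *ᵥ Pi.single i 1 with hudef
  have hAu : A *ᵥ u = Pi.single i 1 := mulVec_inv_cancel' hA _
  have huy : u ⬝ᵥ (A *ᵥ y) = y i := by
    rw [dot_swap' hA.1, hAu, dotProduct_single, mul_one]
  have hyu : y ⬝ᵥ (A *ᵥ u) = y i := by rw [hAu, dotProduct_single, mul_one]
  have huu : u ⬝ᵥ (A *ᵥ u) = k := by
    rw [hAu, dotProduct_single, mul_one, hudef]
    simp [mulVec_single, hkdef]
  have h0 : 0 ≤ (y - (y i / k) • u) ⬝ᵥ (A *ᵥ (y - (y i / k) • u)) := by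
    have := hA.posSemidef.dotProduct_mulVec_nonneg (y - (y i / k) • u)
    simpa using this
  rw [mulVec_sub, mulVec_smul, sub_dotProduct, dotProduct_sub, dotProduct_sub,
    smul_dotProduct, smul_dotProduct, dotProduct_smul, dotProduct_smul,
    smul_eq_mul, smul_eq_mul, smul_eq_mul, huy, hyu, huu] at h0
  simp only [smul_eq_mul] at h0
  have hexp : y i / k * (y i / k * k) = y i ^ 2 / k := by
    field_simp
  rw [hexp] at h0
  have : y i / k * y i = y i ^ 2 / k := by field_simp
  rw [this] at h0
  linarith

/-- necessity: if `μ` is not a scalar multiple of `1` and `S` spans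
the mean-variance frontier, then `S ⊇ S*`. -/
theorem spanning_set_contains_Sstar
    {d : ℕ} (hd : 2 ≤ d) (A : Matrix (Fin d) (Fin d) ℝ) (hA : A.PosDef)
    (μ : Fin d → ℝ) (hμ : ∀ t : ℝ, μ ≠ t • (fun _ => (1 : ℝ)))
    (S : Set (Fin d)) (hS : SpansFrontier A μ S) :
    {i : Fin d | (A⁻¹ *ᵥ μ) i ≠ 0 ∨ (A⁻¹ *ᵥ fun _ => (1 : ℝ)) i ≠ 0} ⊆ S := by
  intro i hi
  by_contra hiS
  classical
  set e : Fin d → ℝ := fun _ => 1 with he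
  set um : Fin d → ℝ := A⁻¹ *ᵥ μ with hum
  set ue : Fin d → ℝ := A⁻¹ *ᵥ e with hue
  have hab : um i ≠ 0 ∨ ue i ≠ 0 := hi
  have heC : 0 < e ⬝ᵥ ue := by
    have hez : e ≠ 0 := by
      intro h
      have := congrFun h i
      simp [he] at this
    have := hA.inv.dotProduct_mulVec_pos hez
    simpa [hue] using this
  -- choose coefficients l, g with l*B + g*C = 1 and x i ≠ 0
  obtain ⟨l, g, hc1, hc2⟩ : ∃ l g : ℝ,
      l * (e ⬝ᵥ um) + g * (e ⬝ᵥ ue) = 1 ∧ l * um i + g * ue i ≠ 0 := by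
    set a := um i
    set b := ue i
    set B := e ⬝ᵥ um with hBdef
    set C := e ⬝ᵥ ue with hCdef
    by_cases hpar : B * b - a * C = 0
    · have hb : b ≠ 0 := by
        intro hb0
        rcases hab with ha | hb
        · apply ha
          have : a * C = 0 := by rw [hb0] at hpar; linarith
          rcases mul_eq_zero.mp this with h | h
          · exact h
          · exact absurd h heC.ne'
        · exact hb hb0
      refine ⟨0, 1 / C, by field_simp; ring, ?_⟩
      simp only [zero_mul, zero_add]
      exact mul_ne_zero (one_div_ne_zero heC.ne') hb
    · refine ⟨(b - C) / (B * b - a * C), (B - a) / (B * b - a * C), ?_, ?_⟩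
      · field_simp [show b * B - C * a ≠ 0 by intro h; apply hpar; linarith]
        ring
      · have : (b - C) / (B * b - a * C) * a + (B - a) / (B * b - a * C) * b = 1 := by
          field_simp [show b * B - C * a ≠ 0 by intro h; apply hpar; linarith]
          ring
        rw [this]
        exact one_ne_zero
  set x : Fin d → ℝ := l • um + g • ue with hx
  have hxe : e ⬝ᵥ x = 1 := by
    rw [hx, dotProduct_add, dotProduct_smul, dotProduct_smul, smul_eq_mul, smul_eq_mul]
    exact hc1
  have hAx : A *ᵥ x = l • μ + g • e := by
    rw [hx, mulVec_add, mulVec_smul, mulVec_smul, hum, hue,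
      mulVec_inv_cancel' hA, mulVec_inv_cancel' hA]
  have hxi : x i ≠ 0 := by
    simpa [hx] using hc2
  set p : ℝ := μ ⬝ᵥ x with hp
  set V : ℝ := x ⬝ᵥ (A *ᵥ x) with hV
  set k : ℝ := A⁻¹ i i with hk
  have hkpos : 0 < k := inv_diag_pos' hA i
  -- every S-supported feasible portfolio has variance ≥ V + (x i)^2 / k
  have h1 : ((V + (x i) ^ 2 / k : ℝ) : EReal) ≤ vS A μ S p := by
    apply le_sInf
    rintro q ⟨z, hz1, hzp, hz0, rfl⟩
    have hzi : z i = 0 := hz0 i hiS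
    have hcross : (z - x) ⬝ᵥ (A *ᵥ x) = 0 := by
      rw [hAx, dotProduct_add, dotProduct_smul, dotProduct_smul, smul_eq_mul, smul_eq_mul,
        dotProduct_comm (z - x) μ, dotProduct_comm (z - x) e,
        dotProduct_sub, dotProduct_sub]
      rw [hzp, ← hp, hz1, hxe]
      ring
    have hdecomp : z ⬝ᵥ (A *ᵥ z)
        = V + 2 * ((z - x) ⬝ᵥ (A *ᵥ x)) + (z - x) ⬝ᵥ (A *ᵥ (z - x)) := by
      have hsym : z ⬝ᵥ (A *ᵥ x) = x ⬝ᵥ (A *ᵥ z) := dot_swap' hA.1 _ _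
      simp only [mulVec_sub, dotProduct_sub, sub_dotProduct, hV]
      linarith
    have hlow : ((z - x) i) ^ 2 / k ≤ (z - x) ⬝ᵥ (A *ᵥ (z - x)) := quad_lb' hA i _
    have hzx : ((z - x) i) ^ 2 = (x i) ^ 2 := by
      simp [hzi]
    have hfin : V + (x i) ^ 2 / k ≤ z ⬝ᵥ (A *ᵥ z) := by
      rw [hdecomp, hcross]
      rw [hzx] at hlow
      linarith
    exact_mod_cast EReal.coe_le_coe_iff.mpr hfin
  have h2 : vS A μ Set.univ p ≤ ((V : ℝ) : EReal) := by
    apply sInf_le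
    exact ⟨x, hxe, rfl, by simp, rfl⟩
  have hcontr : ((V + (x i) ^ 2 / k : ℝ) : EReal) ≤ ((V : ℝ) : EReal) :=
    le_trans (by rw [hS p] at h1; exact h1) h2
  have hreal : V + (x i) ^ 2 / k ≤ V := EReal.coe_le_coe_iff.mp hcontr
  have hpos : 0 < (x i) ^ 2 / k := div_pos (by positivity) hkpos
  linarith
end

section
/- (Degenerate case, equation (A.4) of the paper.) Suppose μ = a₀·1_d for some a₀ ∈ ℝ. Then {i : (Σ^{-1}μ)_i ≠ 0} ⊆ {i : (Σ^{-1}1_d)_i ≠ 0}, so S* = {i : (Σ^{-1}1_d)_i ≠ 0}; moreover a subset S ⊆ {1,…,d} spans the mean-variance frontier if and only if S ⊇ {i : (Σ^{-1}1_d)_i ≠ 0}. -/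
open Matrix

/-- degenerate case, equation (A.4) of the paper: if `μ = a₀·1`,
then the support of `Σ⁻¹μ` is contained in that of `Σ⁻¹1`, `S*` equals the support
of `Σ⁻¹1`, and `S` spans iff it contains this support. -/
theorem degenerate_case_spanning
    {d : ℕ} (hd : 2 ≤ d) (A : Matrix (Fin d) (Fin d) ℝ) (hA : A.PosDef)
    (μ : Fin d → ℝ) (a₀ : ℝ) (hμ : μ = a₀ • (fun _ => (1 : ℝ))) :
    ({i : Fin d | (A⁻¹ *ᵥ μ) i ≠ 0} ⊆ {i : Fin d | (A⁻¹ *ᵥ fun _ => (1 : ℝ)) i ≠ 0}) ∧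
    ({i : Fin d | (A⁻¹ *ᵥ μ) i ≠ 0 ∨ (A⁻¹ *ᵥ fun _ => (1 : ℝ)) i ≠ 0}
      = {i : Fin d | (A⁻¹ *ᵥ fun _ => (1 : ℝ)) i ≠ 0}) ∧
    (∀ S : Set (Fin d), SpansFrontier A μ S ↔
      {i : Fin d | (A⁻¹ *ᵥ fun _ => (1 : ℝ)) i ≠ 0} ⊆ S) := by
  classical
  have hT : Aᵀ = A := by rw [← conjTranspose_eq_transpose_of_trivial, hA.1.eq]
  have hsym : ∀ x y : Fin d → ℝ, x ⬝ᵥ (A *ᵥ y) = (A *ᵥ x) ⬝ᵥ y := by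
    intro x y; rw [dotProduct_mulVec, ← mulVec_transpose, hT]
  have hpos : ∀ x : Fin d → ℝ, x ≠ 0 → 0 < x ⬝ᵥ (A *ᵥ x) := by
    intro x hx; simpa using hA.dotProduct_mulVec_pos hx
  have hnn : ∀ x : Fin d → ℝ, 0 ≤ x ⬝ᵥ (A *ᵥ x) := by
    intro x; simpa using hA.posSemidef.dotProduct_mulVec_nonneg x
  have hinv : ∀ v : Fin d → ℝ, A *ᵥ (A⁻¹ *ᵥ v) = v := by
    intro v; rw [mulVec_mulVec, Matrix.mul_nonsing_inv _ hA.det_pos.ne'.isUnit, one_mulVec]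
  set o : Fin d → ℝ := fun _ => (1 : ℝ) with ho
  set w : Fin d → ℝ := A⁻¹ *ᵥ o with hwdef
  have hw : A *ᵥ w = o := hinv o
  have hone : o ≠ 0 := by
    intro h
    have h0 : o ⟨0, by omega⟩ = 0 := by rw [h]; rfl
    simp [ho] at h0
  have hwne : w ≠ 0 := by
    intro h; apply hone; rw [← hw, h, mulVec_zero]
  have hc : 0 < o ⬝ᵥ w := by
    have := hpos w hwne
    rwa [hw, dotProduct_comm] at this
  set c : ℝ := o ⬝ᵥ w with hcdef
  set xs : Fin d → ℝ := c⁻¹ • w with hxsdef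
  have h1xs : o ⬝ᵥ xs = 1 := by
    rw [hxsdef, dotProduct_smul, smul_eq_mul, ← hcdef, inv_mul_cancel₀ hc.ne']
  have hAxs : A *ᵥ xs = c⁻¹ • o := by rw [hxsdef, mulVec_smul, hw]
  have hvxs : xs ⬝ᵥ (A *ᵥ xs) = c⁻¹ := by
    rw [hAxs, dotProduct_smul, smul_eq_mul, dotProduct_comm, h1xs, mul_one]
  have expand : ∀ x : Fin d → ℝ, o ⬝ᵥ x = 1 →
      x ⬝ᵥ (A *ᵥ x) = c⁻¹ + (x - xs) ⬝ᵥ (A *ᵥ (x - xs)) := by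
    intro x hx
    have hoy : o ⬝ᵥ (x - xs) = 0 := by rw [dotProduct_sub, hx, h1xs, sub_self]
    have h1 : xs ⬝ᵥ (A *ᵥ (x - xs)) = 0 := by
      rw [hsym, hAxs, smul_dotProduct, hoy, smul_zero]
    have h2 : (x - xs) ⬝ᵥ (A *ᵥ xs) = 0 := by
      rw [hAxs, dotProduct_smul, dotProduct_comm, hoy, smul_zero]
    have hxe : x = xs + (x - xs) := by ring
    calc x ⬝ᵥ (A *ᵥ x) = (xs + (x - xs)) ⬝ᵥ (A *ᵥ (xs + (x - xs))) := by rw [← hxe]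
      _ = c⁻¹ + (x - xs) ⬝ᵥ (A *ᵥ (x - xs)) := by
          simp only [mulVec_add, dotProduct_add, add_dotProduct]
          rw [hvxs, h1, h2]; ring
  have key : ∀ i : Fin d, ∃ β : ℝ, 0 < β ∧
      ∀ y : Fin d → ℝ, (y i) ^ 2 ≤ (y ⬝ᵥ (A *ᵥ y)) * β := by
    intro i
    set z : Fin d → ℝ := A⁻¹ *ᵥ Pi.single i 1 with hzdef
    have hz : A *ᵥ z = Pi.single i 1 := hinv _
    have hzne : z ≠ 0 := by
      intro h
      have h0 : (Pi.single i 1 : Fin d → ℝ) = 0 := by rw [← hz, h, mulVec_zero]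
      have := congrFun h0 i
      simp at this
    set β := z ⬝ᵥ (A *ᵥ z) with hβdef
    have hβ : 0 < β := hpos z hzne
    refine ⟨β, hβ, fun y => ?_⟩
    have hyz : y ⬝ᵥ (A *ᵥ z) = y i := by rw [hz, dotProduct_single, mul_one]
    have hzy : z ⬝ᵥ (A *ᵥ y) = y i := by rw [hsym, hz, single_dotProduct, one_mul]
    have h0 := hnn (β • y - (y i) • z)
    simp only [mulVec_sub, mulVec_smul, dotProduct_sub, sub_dotProduct, dotProduct_smul,
      smul_dotProduct, smul_eq_mul] at h0
    rw [hyz, hzy, ← hβdef] at h0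
    nlinarith [h0, hβ]
  have hμd : ∀ x : Fin d → ℝ, o ⬝ᵥ x = 1 → μ ⬝ᵥ x = a₀ := by
    intro x hx
    rw [hμ, smul_dotProduct, hx, smul_eq_mul, mul_one]
  have hempty : ∀ (S : Set (Fin d)) (p : ℝ), p ≠ a₀ → vS A μ S p = ⊤ := by
    intro S p hp
    unfold vS
    refine (congrArg sInf (?_ : _ = (∅ : Set EReal))).trans sInf_empty
    ext q
    simp only [Set.mem_setOf_eq, Set.mem_empty_iff_false, iff_false, not_exists]
    rintro x ⟨h1, h2, -, -⟩
    exact hp (h2.symm.trans (hμd x h1))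
  have hlow : ∀ (S : Set (Fin d)) (p : ℝ), ((c⁻¹ : ℝ) : EReal) ≤ vS A μ S p := by
    intro S p
    apply le_sInf
    rintro q ⟨x, h1, -, -, rfl⟩
    rw [EReal.coe_le_coe_iff]
    have he := expand x h1
    have hq := hnn (x - xs)
    linarith
  have hup : ∀ S : Set (Fin d), {i | w i ≠ 0} ⊆ S → vS A μ S a₀ ≤ ((c⁻¹ : ℝ) : EReal) := by
    intro S hS
    apply sInf_le
    refine ⟨xs, h1xs, hμd xs h1xs, ?_, by rw [hvxs]⟩
    intro i hi
    have hwi : w i = 0 := by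
      by_contra h; exact hi (hS h)
    show (c⁻¹ • w) i = 0
    simp [hwi]
  have hmono : ∀ (S : Set (Fin d)) (p : ℝ), vS A μ Set.univ p ≤ vS A μ S p := by
    intro S p
    apply sInf_le_sInf
    rintro q ⟨x, h1, h2, h3, h4⟩
    exact ⟨x, h1, h2, fun i hi => absurd (Set.mem_univ i) hi, h4⟩
  have part1 : {i : Fin d | (A⁻¹ *ᵥ μ) i ≠ 0} ⊆ {i : Fin d | w i ≠ 0} := by
    intro i hi
    simp only [Set.mem_setOf_eq] at hi ⊢
    have hμw : A⁻¹ *ᵥ μ = a₀ • w := by rw [hμ, mulVec_smul]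
    rw [hμw] at hi
    intro h
    apply hi
    show a₀ • w i = 0
    simp [h]
  refine ⟨part1, ?_, ?_⟩
  · ext i
    simp only [Set.mem_setOf_eq]
    exact ⟨fun h => h.elim (fun h' => part1 h') id, Or.inr⟩
  · intro S
    constructor
    · intro hsp i hi
      simp only [Set.mem_setOf_eq] at hi
      by_contra hiS
      obtain ⟨β, hβ, hcs⟩ := key i
      have hxsi : xs i ≠ 0 := by
        show c⁻¹ • w i ≠ 0
        simp only [smul_eq_mul]
        exact mul_ne_zero (inv_ne_zero hc.ne') hi
      have hlb : ((c⁻¹ + (xs i) ^ 2 / β : ℝ) : EReal) ≤ vS A μ S a₀ := by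
        apply le_sInf
        rintro q ⟨x, h1, -, h3, rfl⟩
        rw [EReal.coe_le_coe_iff]
        have he := expand x h1
        have hcs' := hcs (x - xs)
        have hxi : x i = 0 := h3 i hiS
        have h5 : (x - xs) i = -xs i := by simp [hxi]
        rw [h5] at hcs'
        have hQ : (xs i) ^ 2 / β ≤ (x - xs) ⬝ᵥ (A *ᵥ (x - xs)) := by
          rw [div_le_iff₀ hβ]
          nlinarith
        linarith
      have h6 : vS A μ S a₀ ≤ ((c⁻¹ : ℝ) : EReal) := by
        rw [hsp a₀]
        exact hup Set.univ (fun j _ => Set.mem_univ j)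
      have h7 := le_trans hlb h6
      rw [EReal.coe_le_coe_iff] at h7
      have hδ : 0 < (xs i) ^ 2 / β := div_pos (by positivity) hβ
      linarith
    · intro hS p
      by_cases hp : p = a₀
      · subst hp
        exact le_antisymm (le_trans (hup S hS) (hlow Set.univ p)) (hmono S p)
      · rw [hempty S p hp, hempty Set.univ p hp]
end

section
/- (Redundancy characterization of a single asset, equations (2.2)–(2.4) of the paper.) For each i ∈ {1,…,d}, the subset {1,…,d}∖{i} spans the mean-variance frontier (i.e., asset i is redundant) if and only if α_i = 0 and 1_{d−1}^⊤β_i = 1; equivalently, i ∈ S* if and only if α_i² + (1_{d−1}^⊤β_i − 1)² > 0. -/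
open Matrix

namespace SA

lemma sum_split {M : Type*} [AddCommMonoid M] {d : ℕ} (i : Fin d) (f : Fin d → M) :
    ∑ k, f k = f i + ∑ j : {j : Fin d // j ≠ i}, f j.val := by
  rw [Fintype.sum_eq_add_sum_compl i f, Finset.sum_subtype (p := fun j => j ≠ i) {i}ᶜ (by simp) f]

lemma dot_split {d : ℕ} (i : Fin d) (x z : Fin d → ℝ) :
    x ⬝ᵥ z = x i * z i + ∑ j : {j : Fin d // j ≠ i}, x j.val * z j.val :=
  sum_split i _

variable {d : ℕ} (A : Matrix (Fin d) (Fin d) ℝ) (i : Fin d)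

/-- hedging residual `eᵢ - β̃ᵢ`. -/
noncomputable def resid : Fin d → ℝ :=
  fun j => if h : j = i then 1 else -(betaCoef A i ⟨j, h⟩)

noncomputable def sVal : ℝ := (A *ᵥ resid A i) i

lemma resid_self : resid A i i = 1 := by simp [resid]

lemma resid_ne_zero : resid A i ≠ 0 := by
  intro h
  have := congrFun h i
  simp [resid_self] at this

lemma subPosDef (hA : A.PosDef) : (subMat A i).PosDef := by
  refine posDef_iff_dotProduct_mulVec.mpr ⟨(hA.posSemidef.submatrix Subtype.val).1, fun x hx => ?_⟩
  classical
  set x' : Fin d → ℝ := fun j => if h : j = i then 0 else x ⟨j, h⟩ with hx'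
  have hx'0 : x' ≠ 0 := by
    obtain ⟨j, hj⟩ := Function.ne_iff.mp hx
    intro h
    have := congrFun h j.val
    simp [hx', j.prop] at this
    exact hj this
  have key : star x ⬝ᵥ (subMat A i *ᵥ x) = star x' ⬝ᵥ (A *ᵥ x') := by
    simp only [star_trivial]
    rw [dot_split i x' (A *ᵥ x')]
    have h0 : x' i = 0 := by simp [hx']
    rw [h0]
    simp only [zero_mul, zero_add]
    have inner : ∀ j : {j : Fin d // j ≠ i}, (subMat A i *ᵥ x) j = (A *ᵥ x') j.val := by
      intro j
      rw [show (A *ᵥ x') j.val = (A j.val) ⬝ᵥ x' from rfl, dot_split i, h0, mul_zero, zero_add]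
      simp only [subMat, mulVec, dotProduct, submatrix_apply]
      exact Finset.sum_congr rfl fun k _ => by simp [hx', k.prop]
    simp only [dotProduct]
    refine Finset.sum_congr rfl fun j _ => ?_
    rw [show x' j.val = x j from by simp [hx', j.prop], inner j]
  rw [key]
  exact hA.dotProduct_mulVec_pos hx'0

lemma mulVec_resid (hA : A.PosDef) :
    A *ᵥ resid A i = fun j => if j = i then sVal A i else 0 := by
  classical
  have hdet : IsUnit (subMat A i).det := isUnit_iff_ne_zero.mpr (subPosDef A i hA).det_pos.ne'
  funext j
  by_cases hj : j = i
  · subst hj; simp [sVal]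
  · simp only [hj, if_false]
    have : (A *ᵥ resid A i) j = A j i * 1 + ∑ k : {k : Fin d // k ≠ i},
        A j k.val * (-(betaCoef A i k)) := by
      rw [show (A *ᵥ resid A i) j = (A j) ⬝ᵥ resid A i from rfl, dot_split i]
      congr 1
      · simp [resid]
      · exact Finset.sum_congr rfl fun k _ => by simp only [resid, dif_neg k.prop]
    rw [this]
    have h2 : ∑ k : {k : Fin d // k ≠ i}, A j k.val * (-(betaCoef A i k))
        = -((subMat A i *ᵥ betaCoef A i) ⟨j, hj⟩) := by
      simp [subMat, mulVec, dotProduct, mul_comm]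
    rw [h2]
    have h3 : subMat A i *ᵥ betaCoef A i = gammaCol A i := by
      rw [betaCoef, Matrix.mulVec_mulVec, Matrix.mul_nonsing_inv _ hdet, Matrix.one_mulVec]
    rw [h3]
    simp [gammaCol]

end SA

namespace SA2
open SA
variable {d : ℕ} (A : Matrix (Fin d) (Fin d) ℝ) (i : Fin d)

lemma dot_resid (b : Fin d → ℝ) :
    resid A i ⬝ᵥ b = b i - ∑ j : {j : Fin d // j ≠ i}, betaCoef A i j * b j.val := by
  rw [dot_split i, resid_self, one_mul]
  congr 1
  rw [← Finset.sum_neg_distrib]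
  exact Finset.sum_congr rfl fun k _ => by simp only [resid, dif_neg k.prop]; ring

lemma dot_mulVec_resid (hA : A.PosDef) (x : Fin d → ℝ) :
    x ⬝ᵥ (A *ᵥ resid A i) = sVal A i * x i := by
  rw [mulVec_resid A i hA, dotProduct]
  rw [Finset.sum_eq_single i]
  · simp [mul_comm]
  · intro k _ hk; simp [hk]
  · simp

lemma sVal_pos (hA : A.PosDef) : 0 < sVal A i := by
  have h := hA.dotProduct_mulVec_pos (resid_ne_zero A i)
  rw [star_trivial, dot_mulVec_resid A i hA, resid_self, mul_one] at h
  exact h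

lemma dot_symm (hA : A.PosDef) (u v : Fin d → ℝ) :
    u ⬝ᵥ (A *ᵥ v) = v ⬝ᵥ (A *ᵥ u) := by
  have hsymm : Aᵀ = A := by
    have := hA.1
    rwa [Matrix.IsHermitian, conjTranspose_eq_transpose_of_trivial] at this
  rw [Matrix.dotProduct_mulVec, ← Matrix.mulVec_transpose, hsymm, dotProduct_comm]

lemma detUnit (hA : A.PosDef) : IsUnit A.det := isUnit_iff_ne_zero.mpr hA.det_pos.ne'

lemma cancel₁ (hA : A.PosDef) (v : Fin d → ℝ) : A *ᵥ (A⁻¹ *ᵥ v) = v := by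
  rw [Matrix.mulVec_mulVec, Matrix.mul_nonsing_inv _ (detUnit A hA), Matrix.one_mulVec]

lemma cancel₂ (hA : A.PosDef) (v : Fin d → ℝ) : A⁻¹ *ᵥ (A *ᵥ v) = v := by
  rw [Matrix.mulVec_mulVec, Matrix.nonsing_inv_mul _ (detUnit A hA), Matrix.one_mulVec]

lemma inv_apply (hA : A.PosDef) (b : Fin d → ℝ) :
    (A⁻¹ *ᵥ b) i = (sVal A i)⁻¹ * (resid A i ⬝ᵥ b) := by
  have hinv : Aᵀ⁻¹ = A⁻¹ := by
    have : Aᵀ = A := by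
      have := hA.1
      rwa [Matrix.IsHermitian, conjTranspose_eq_transpose_of_trivial] at this
    rw [this]
  have hr : A⁻¹ *ᵥ (fun j => if j = i then sVal A i else 0) = resid A i := by
    rw [← mulVec_resid A i hA, cancel₂ A hA]
  have hcol : ∀ k, A⁻¹ k i * sVal A i = resid A i k := by
    intro k
    have := congrFun hr k
    rw [mulVec, dotProduct] at this
    rw [Finset.sum_eq_single i (fun b _ hb => by simp [hb]) (by simp)] at this
    simpa using this
  have hs := (sVal_pos A i hA).ne'
  simp only [mulVec, dotProduct]
  rw [Finset.mul_sum]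
  refine Finset.sum_congr rfl fun k _ => ?_
  have hsym : A⁻¹ i k = A⁻¹ k i := by
    have h' : A⁻¹ᵀ = A⁻¹ := by rw [Matrix.transpose_nonsing_inv, hinv]
    conv_lhs => rw [← h']
    rw [Matrix.transpose_apply]
  rw [hsym, ← hcol k]
  field_simp

lemma quad_lower (hA : A.PosDef) (y : Fin d → ℝ) :
    sVal A i * (y i) ^ 2 ≤ y ⬝ᵥ (A *ᵥ y) := by
  set z : Fin d → ℝ := y - y i • resid A i with hz
  have hzi : z i = 0 := by simp [hz, resid_self]
  have hy : y = z + y i • resid A i := by simp [hz]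
  have hzz : 0 ≤ z ⬝ᵥ (A *ᵥ z) := by
    have := hA.posSemidef.dotProduct_mulVec_nonneg z
    simpa using this
  have expand : y ⬝ᵥ (A *ᵥ y) = z ⬝ᵥ (A *ᵥ z) + sVal A i * (y i) ^ 2 := by
    calc y ⬝ᵥ (A *ᵥ y)
        = (z + y i • resid A i) ⬝ᵥ (A *ᵥ (z + y i • resid A i)) := by rw [← hy]
      _ = z ⬝ᵥ (A *ᵥ z) + y i * (z ⬝ᵥ (A *ᵥ resid A i))
            + y i * (resid A i ⬝ᵥ (A *ᵥ z))
            + y i * (y i * (resid A i ⬝ᵥ (A *ᵥ resid A i))) := by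
          simp only [Matrix.mulVec_add, Matrix.mulVec_smul, dotProduct_add,
            add_dotProduct, smul_dotProduct, dotProduct_smul, smul_eq_mul]
          ring
      _ = z ⬝ᵥ (A *ᵥ z) + sVal A i * (y i) ^ 2 := by
          rw [dot_symm A hA (resid A i) z, dot_mulVec_resid A i hA,
            dot_mulVec_resid A i hA, hzi, resid_self]
          ring
  linarith

end SA2


namespace SA3
open SA SA2

variable {d : ℕ} (A : Matrix (Fin d) (Fin d) ℝ) (μ : Fin d → ℝ) (i : Fin d)

lemma spans_of (hA : A.PosDef) (hα : alphaCoef A μ i = 0)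
    (hβ : ∑ j : {j : Fin d // j ≠ i}, betaCoef A i j = 1) :
    SpansFrontier A μ (Set.univ \ {i}) := by
  intro p
  apply le_antisymm
  · -- vS S p ≤ vS univ p : replicate any full portfolio
    apply sInf_le_sInf_of_isCoinitialFor
    rintro q ⟨x, hx1, hxμ, -, rfl⟩
    set y : Fin d → ℝ := x - x i • resid A i with hy
    have hyi : y i = 0 := by simp [hy, resid_self]
    refine ⟨((y ⬝ᵥ (A *ᵥ y) : ℝ) : EReal), ⟨y, ?_, ?_, ?_, rfl⟩, ?_⟩
    · rw [hy, dotProduct_sub, dotProduct_smul, dotProduct_comm _ (resid A i),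
        dot_resid A i (fun _ => (1:ℝ)), hx1]
      simp [hβ]
    · rw [hy, dotProduct_sub, dotProduct_smul, dotProduct_comm μ (resid A i),
        dot_resid A i μ, hxμ]
      have : alphaCoef A μ i = μ i - ∑ j : {j : Fin d // j ≠ i}, betaCoef A i j * μ j.val := rfl
      rw [← this, hα]
      simp
    · intro k hk
      have : k = i := by
        by_contra hne
        exact hk ⟨trivial, hne⟩
      rw [this, hyi]
    · have expand : y ⬝ᵥ (A *ᵥ y) = x ⬝ᵥ (A *ᵥ x) - sVal A i * (x i) ^ 2 := by
        rw [hy]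
        simp only [Matrix.mulVec_sub, Matrix.mulVec_smul, dotProduct_sub,
          sub_dotProduct, smul_dotProduct, dotProduct_smul, smul_eq_mul]
        rw [dot_mulVec_resid A i hA x, dot_symm A hA (resid A i) x,
          dot_mulVec_resid A i hA x, dot_mulVec_resid A i hA (resid A i), resid_self]
        ring
      rw [expand]
      have hle : x ⬝ᵥ (A *ᵥ x) - sVal A i * (x i) ^ 2 ≤ x ⬝ᵥ (A *ᵥ x) := by
        nlinarith [sVal_pos A i hA, sq_nonneg (x i)]
      exact_mod_cast hle
  · -- vS univ p ≤ vS S p : set inclusion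
    apply sInf_le_sInf
    rintro q ⟨x, hx1, hxμ, -, rfl⟩
    exact ⟨x, hx1, hxμ, fun k hk => absurd trivial hk, rfl⟩

lemma not_spans (hA : A.PosDef) (xs : Fin d → ℝ) (lam th : ℝ)
    (hAx : A *ᵥ xs = lam • (fun _ => (1:ℝ)) + th • μ)
    (h1 : (fun _ => (1:ℝ)) ⬝ᵥ xs = 1) (hi : xs i ≠ 0) :
    ¬ SpansFrontier A μ (Set.univ \ {i}) := by
  intro hsp
  set p := μ ⬝ᵥ xs with hp
  have hupper : vS A μ Set.univ p ≤ ((xs ⬝ᵥ (A *ᵥ xs) : ℝ) : EReal) :=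
    sInf_le ⟨xs, h1, rfl, fun k hk => absurd trivial hk, rfl⟩
  have hlow : ((xs ⬝ᵥ (A *ᵥ xs) + sVal A i * (xs i) ^ 2 : ℝ) : EReal)
      ≤ vS A μ (Set.univ \ {i}) p := by
    apply le_sInf
    rintro q ⟨x, hx1, hxμ, hx0, rfl⟩
    have hxi : x i = 0 := hx0 i (by simp)
    set y : Fin d → ℝ := x - xs with hy
    have hyi : (y i) ^ 2 = (xs i) ^ 2 := by rw [hy]; simp [hxi]
    have hcross : y ⬝ᵥ (A *ᵥ xs) = 0 := by
      rw [hAx, hy]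
      simp only [dotProduct_add, dotProduct_smul, sub_dotProduct, smul_eq_mul]
      rw [dotProduct_comm x (fun _ => (1:ℝ)), dotProduct_comm xs (fun _ => (1:ℝ)),
        dotProduct_comm x μ, dotProduct_comm xs μ, hx1, h1, hxμ, ← hp]
      ring
    have expand : x ⬝ᵥ (A *ᵥ x) = xs ⬝ᵥ (A *ᵥ xs) + 2 * (y ⬝ᵥ (A *ᵥ xs)) + y ⬝ᵥ (A *ᵥ y) := by
      have hxy : x = y + xs := by simp [hy]
      calc x ⬝ᵥ (A *ᵥ x) = (y + xs) ⬝ᵥ (A *ᵥ (y + xs)) := by rw [← hxy]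
        _ = y ⬝ᵥ (A *ᵥ y) + y ⬝ᵥ (A *ᵥ xs) + xs ⬝ᵥ (A *ᵥ y) + xs ⬝ᵥ (A *ᵥ xs) := by
            simp only [Matrix.mulVec_add, dotProduct_add, add_dotProduct]; ring
        _ = _ := by rw [dot_symm A hA xs y]; ring
    have hq : xs ⬝ᵥ (A *ᵥ xs) + sVal A i * (xs i) ^ 2 ≤ x ⬝ᵥ (A *ᵥ x) := by
      have := quad_lower A i hA y
      rw [hyi] at this
      rw [expand, hcross]
      linarith
    exact_mod_cast hq
  have := hlow.trans ((hsp p).le.trans hupper)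
  rw [EReal.coe_le_coe_iff] at this
  nlinarith [sVal_pos A i hA, hi, sq_pos_of_ne_zero hi]

end SA3

/-- redundancy characterization of a single asset, equations
(2.2)–(2.4) of the paper: asset `i` is redundant iff `αᵢ = 0` and `1ᵀβᵢ = 1`;
equivalently `i ∈ S*` iff `αᵢ² + (1ᵀβᵢ − 1)² > 0`. -/
theorem single_asset_redundancy
    {d : ℕ} (hd : 2 ≤ d) (A : Matrix (Fin d) (Fin d) ℝ) (hA : A.PosDef)
    (μ : Fin d → ℝ) :
    ∀ i : Fin d,
      (SpansFrontier A μ (Set.univ \ {i}) ↔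
        (alphaCoef A μ i = 0 ∧ ∑ j : {j : Fin d // j ≠ i}, betaCoef A i j = 1)) ∧
      (i ∈ {k : Fin d | (A⁻¹ *ᵥ μ) k ≠ 0 ∨ (A⁻¹ *ᵥ fun _ => (1 : ℝ)) k ≠ 0} ↔
        0 < alphaCoef A μ i ^ 2
          + (∑ j : {j : Fin d // j ≠ i}, betaCoef A i j - 1) ^ 2) := by
  intro i
  have hs := SA2.sVal_pos A i hA
  have hsinv : (SA.sVal A i)⁻¹ ≠ 0 := inv_ne_zero hs.ne'
  set B := ∑ j : {j : Fin d // j ≠ i}, betaCoef A i j with hB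
  have hμi : (A⁻¹ *ᵥ μ) i = (SA.sVal A i)⁻¹ * alphaCoef A μ i := by
    rw [SA2.inv_apply A i hA μ, SA2.dot_resid A i μ]; rfl
  have h1i : (A⁻¹ *ᵥ fun _ => (1 : ℝ)) i = (SA.sVal A i)⁻¹ * (1 - B) := by
    rw [SA2.inv_apply A i hA _, SA2.dot_resid A i _]
    simp [hB]
  have hone : (fun _ => (1 : ℝ)) ≠ (0 : Fin d → ℝ) := by
    intro h
    have := congrFun h ⟨0, by omega⟩
    simp at this
  -- contrapositive of the forward direction
  have dir : ¬ (alphaCoef A μ i = 0 ∧ B = 1) → ¬ SpansFrontier A μ (Set.univ \ {i}) := by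
    intro hne
    by_cases hu : (A⁻¹ *ᵥ fun _ => (1 : ℝ)) i = 0
    · -- u_i = 0 : then B = 1 and α ≠ 0
      have hBone : B = 1 := by
        rw [h1i] at hu
        rcases mul_eq_zero.mp hu with h | h
        · exact absurd h hsinv
        · linarith
      have hα : alphaCoef A μ i ≠ 0 := fun h0 => hne ⟨h0, hBone⟩
      have hw : (A⁻¹ *ᵥ μ) i ≠ 0 := by
        rw [hμi]; exact mul_ne_zero hsinv hα
      set w1 : Fin d → ℝ := A⁻¹ *ᵥ (fun _ => (1 : ℝ)) with hw1
      set wμ : Fin d → ℝ := A⁻¹ *ᵥ μ with hwμ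
      set b : ℝ := (fun _ => (1 : ℝ)) ⬝ᵥ wμ with hb
      have ha : 0 < (fun _ => (1 : ℝ)) ⬝ᵥ w1 := by
        have := hA.inv.dotProduct_mulVec_pos hone
        simpa [star_trivial, hw1] using this
      set a : ℝ := (fun _ => (1 : ℝ)) ⬝ᵥ w1 with haa
      refine SA3.not_spans A μ i hA (((1 - b) * a⁻¹) • w1 + wμ) ((1 - b) * a⁻¹) 1 ?_ ?_ ?_
      · rw [Matrix.mulVec_add, Matrix.mulVec_smul, SA2.cancel₁ A hA, SA2.cancel₁ A hA]
        simp
      · rw [dotProduct_add, dotProduct_smul, smul_eq_mul, ← hb, ← haa]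
        field_simp
        ring
      · simp only [Pi.add_apply, Pi.smul_apply, smul_eq_mul, hu, mul_zero, zero_add]
        exact hw
    · -- u_i ≠ 0 : global minimum-variance portfolio has weight on i
      have ha : 0 < (fun _ => (1 : ℝ)) ⬝ᵥ (A⁻¹ *ᵥ fun _ => (1 : ℝ)) := by
        have := hA.inv.dotProduct_mulVec_pos hone
        simpa [star_trivial] using this
      set a : ℝ := (fun _ => (1 : ℝ)) ⬝ᵥ (A⁻¹ *ᵥ fun _ => (1 : ℝ)) with haa
      refine SA3.not_spans A μ i hA (a⁻¹ • (A⁻¹ *ᵥ fun _ => (1 : ℝ))) a⁻¹ 0 ?_ ?_ ?_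
      · rw [Matrix.mulVec_smul, SA2.cancel₁ A hA]
        simp
      · rw [dotProduct_smul, smul_eq_mul, ← haa, inv_mul_cancel₀ ha.ne']
      · simp only [Pi.smul_apply, smul_eq_mul]
        exact mul_ne_zero (inv_ne_zero ha.ne') hu
  refine ⟨⟨fun hsp => ?_, fun h => SA3.spans_of A μ i hA h.1 h.2⟩, ?_⟩
  · by_contra hne
    exact dir hne hsp
  · simp only [Set.mem_setOf_eq, hμi, h1i]
    constructor
    · rintro (h | h)
      · have hα : alphaCoef A μ i ≠ 0 := fun h0 => h (by rw [h0, mul_zero])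
        have := sq_pos_of_ne_zero hα
        nlinarith [sq_nonneg (B - 1)]
      · have hβ : B - 1 ≠ 0 := fun h0 => h (by rw [show (1 : ℝ) - B = 0 by linarith, mul_zero])
        have := sq_pos_of_ne_zero hβ
        nlinarith [sq_nonneg (alphaCoef A μ i)]
    · intro h
      by_contra hc
      push_neg at hc
      obtain ⟨h1, h2⟩ := hc
      have hα : alphaCoef A μ i = 0 := by
        rcases mul_eq_zero.mp h1 with h' | h'
        · exact absurd h' hsinv
        · exact h'
      have hβ : B = 1 := by
        rcases mul_eq_zero.mp h2 with h' | h'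
        · exact absurd h' hsinv
        · linarith
      rw [hα, hβ] at h
      simp at h
end
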